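/- Let y_1 < y_2 < ... < y_k be real numbers with 0 < y_1, y_k ≤ 2π, such that the gaps are nondecreasing: y_1 ≤ y_2 − y_1 ≤ y_3 − y_2 ≤ ... ≤ y_k − y_{k−1}. Suppose q is an index with y_q ≤ π < y_{q+1} and set a := y_{q+1} − y_q, assuming a < π. Then ∑_{i=1}^{k} sin(y_i) ≥ −sin(a/2). -/

import Mathlib

theorem stmt2 (k q : ℕ) (y : ℕ → ℝ) (hq1 : 1 ≤ q) (hqk : q < k)
    (hmono : ∀ i, 1 ≤ i → i < k → y i < y (i + 1))
    (hpos : 0 < y 1) (hlast : y k ≤ 2 * Real.pi)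
    (hgap1 : y 1 ≤ y 2 - y 1)
    (hgaps : ∀ i, 2 ≤ i → i < k → y i - y (i - 1) ≤ y (i + 1) - y i)
    (hsplitq : y q ≤ Real.pi) (hsplitq1 : Real.pi < y (q + 1))
    (ha : y (q + 1) - y q < Real.pi) :
    -(Real.sin ((y (q + 1) - y q) / 2)) ≤ ∑ i ∈ Finset.Icc 1 k, Real.sin (y i) := by
  set a := y (q + 1) - y q with ha_def
  have hpi := Real.pi_pos
  -- monotonicity of y on [1, k]
  have M : ∀ i j, 1 ≤ i → i ≤ j → j ≤ k → y i ≤ y j := by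
    intro i j h1 hij hjk
    induction j, hij using Nat.le_induction with
    | base => exact le_refl _
    | succ n hn ih =>
      have h1n : 1 ≤ n := le_trans h1 hn
      have := hmono n h1n (by omega)
      have := ih (by omega)
      linarith
  -- gap monotonicity
  have G : ∀ i j, 1 ≤ i → i ≤ j → j < k → y (i + 1) - y i ≤ y (j + 1) - y j := by
    intro i j h1 hij hjk
    induction j, hij using Nat.le_induction with
    | base => exact le_refl _
    | succ n hn ih =>
      have h2 : y (n + 1) - y n ≤ y (n + 2) - y (n + 1) := by
        have := hgaps (n + 1) (by omega) (by omega)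
        simpa using this
      have := ih (by omega)
      linarith
  have ha0 : 0 < a := by
    have := hmono q hq1 hqk
    simp only [ha_def]; linarith
  have hd : ∀ i, 1 ≤ i → i ≤ q → y (i + 1) - y i ≤ a := by
    intro i h1 h2
    exact G i q h1 h2 hqk
  have hdg : ∀ j, q ≤ j → j < k → a ≤ y (j + 1) - y j := by
    intro j h1 h2
    exact G q j hq1 h1 h2
  have hy1a : y 1 ≤ a := by
    have := hd 1 le_rfl hq1
    have h2 : y (1 + 1) = y 2 := by norm_num
    rw [h2] at this
    linarith
  have hs : 0 < Real.sin (a / 2) :=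
    Real.sin_pos_of_pos_of_lt_pi (by linarith) (by linarith)
  -- the key point identity
  have hid : ∀ x : ℝ, Real.cos (x - a / 2) - Real.cos (x + a / 2)
      = 2 * Real.sin (a / 2) * Real.sin x := by
    intro x
    rw [Real.cos_sub_cos]
    have h1 : (x - a / 2 + (x + a / 2)) / 2 = x := by ring
    have h2 : (x - a / 2 - (x + a / 2)) / 2 = -(a / 2) := by ring
    rw [h1, h2, Real.sin_neg]
    ring
  -- cross terms are nonnegative
  have hB : ∀ m, 1 ≤ m → m < k →
      Real.cos (y m + a / 2) ≤ Real.cos (y (m + 1) - a / 2) := by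
    intro m h1 hmk
    have key : Real.cos (y (m + 1) - a / 2) - Real.cos (y m + a / 2)
        = -2 * Real.sin ((y m + y (m + 1)) / 2)
            * Real.sin ((y (m + 1) - y m - a) / 2) := by
      rw [Real.cos_sub_cos]
      have h1' : (y (m + 1) - a / 2 + (y m + a / 2)) / 2 = (y m + y (m + 1)) / 2 := by ring
      have h2' : (y (m + 1) - a / 2 - (y m + a / 2)) / 2 = (y (m + 1) - y m - a) / 2 := by ring
      rw [h1', h2']
    rcases lt_trichotomy m q with hlt | heq | hgt
    · -- positive side: m + 1 ≤ q
      have hym : 0 < y m := lt_of_lt_of_le hpos (M 1 m le_rfl h1 (by omega))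
      have hym1 : y (m + 1) ≤ Real.pi :=
        le_trans (M (m + 1) q (by omega) (by omega) (by omega)) hsplitq
      have hymq : y m ≤ Real.pi := le_trans (M m q h1 (by omega) (by omega)) hsplitq
      have hdm : y (m + 1) - y m ≤ a := hd m h1 (by omega)
      have hdm0 : 0 < y (m + 1) - y m := by
        have := hmono m h1 hmk; linarith
      have hs1 : 0 ≤ Real.sin ((y m + y (m + 1)) / 2) :=
        Real.sin_nonneg_of_nonneg_of_le_pi (by linarith) (by linarith)
      have hs2 : Real.sin ((y (m + 1) - y m - a) / 2) ≤ 0 := by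
        have : Real.sin (-((y (m + 1) - y m - a) / 2)) ≥ 0 :=
          Real.sin_nonneg_of_nonneg_of_le_pi (by linarith) (by linarith)
        rw [Real.sin_neg] at this
        linarith
      nlinarith [mul_nonneg hs1 (neg_nonneg.mpr hs2)]
    · -- boundary: m = q
      subst heq
      have : y m + a / 2 = y (m + 1) - a / 2 := by
        simp only [ha_def]; ring
      rw [this]
    · -- negative side: q + 1 ≤ m
      have hym : Real.pi < y m := lt_of_lt_of_le hsplitq1 (M (q + 1) m (by omega) (by omega) (by omega))
      have hym1 : y (m + 1) ≤ 2 * Real.pi := le_trans (M (m + 1) k (by omega) (by omega) le_rfl) hlast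
      have hym1' : Real.pi < y (m + 1) := by
        have := hmono m (by omega) hmk; linarith
      have hymk : y m ≤ 2 * Real.pi := by
        have := hmono m (by omega) hmk; linarith
      have hs1 : Real.sin ((y m + y (m + 1)) / 2) ≤ 0 := by
        have h := Real.sin_nonneg_of_nonneg_of_le_pi
          (x := (y m + y (m + 1)) / 2 - Real.pi) (by linarith) (by linarith)
        rw [Real.sin_sub_pi] at h
        linarith
      have hdm : a ≤ y (m + 1) - y m := hdg m (by omega) hmk
      have hdub : y (m + 1) - y m ≤ Real.pi := by linarith
      have hs2 : 0 ≤ Real.sin ((y (m + 1) - y m - a) / 2) :=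
        Real.sin_nonneg_of_nonneg_of_le_pi (by linarith) (by linarith)
      nlinarith [mul_nonneg (neg_nonneg.mpr hs1) hs2]
  -- telescoping lower bound
  have main : ∀ m, 1 ≤ m → m ≤ k →
      Real.cos (y 1 - a / 2) - Real.cos (y m + a / 2)
        ≤ 2 * Real.sin (a / 2) * ∑ i ∈ Finset.Icc 1 m, Real.sin (y i) := by
    intro m h1 hmk
    induction m, h1 using Nat.le_induction with
    | base =>
      rw [Finset.Icc_self, Finset.sum_singleton]
      rw [← hid (y 1)]
    | succ n hn ih =>
      rw [Finset.sum_Icc_succ_top (by omega : 1 ≤ n + 1)]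
      have ihh := ih (by omega)
      have hBn := hB n hn (by omega)
      have hidn := hid (y (n + 1))
      have expand : 2 * Real.sin (a / 2) *
          (∑ i ∈ Finset.Icc 1 n, Real.sin (y i) + Real.sin (y (n + 1)))
          = 2 * Real.sin (a / 2) * ∑ i ∈ Finset.Icc 1 n, Real.sin (y i)
            + 2 * Real.sin (a / 2) * Real.sin (y (n + 1)) := by ring
      rw [expand]
      linarith
  have hmain := main k (by omega) le_rfl
  -- endpoint estimates
  have hc1 : Real.cos (a / 2) ≤ Real.cos (y 1 - a / 2) := by
    have habs : |y 1 - a / 2| ≤ a / 2 := abs_le.mpr ⟨by linarith, by linarith⟩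
    calc Real.cos (a / 2) ≤ Real.cos (|y 1 - a / 2|) :=
          Real.cos_le_cos_of_nonneg_of_le_pi (abs_nonneg _) (by linarith) habs
      _ = Real.cos (y 1 - a / 2) := Real.cos_abs _
  have hck : Real.cos (y k + a / 2) ≤ 1 := Real.cos_le_one _
  have hcos_mono : Real.cos a ≤ Real.cos (a / 2) :=
    Real.cos_le_cos_of_nonneg_of_le_pi (by linarith) (by linarith) (by linarith)
  have hca : Real.cos a = 1 - 2 * Real.sin (a / 2) ^ 2 := by
    have h2 : Real.cos (2 * (a / 2)) = 2 * Real.cos (a / 2) ^ 2 - 1 := Real.cos_two_mul _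
    have h3 : Real.sin (a / 2) ^ 2 + Real.cos (a / 2) ^ 2 = 1 := Real.sin_sq_add_cos_sq _
    have h4 : 2 * (a / 2) = a := by ring
    rw [h4] at h2
    linarith
  -- conclude
  nlinarith [hmain, hc1, hck, hcos_mono, hca, hs,
    mul_pos hs hs]
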